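/- Let P_1,…,P_r ∈ ℂ[x_1,…,x_r] be homogeneous polynomials of degrees d_1,…,d_r ≥ 1 such that the polynomial ring ℂ[x_1,…,x_r] is integral over the ℂ-subalgebra generated by P_1,…,P_r. Let Q_1,…,Q_r ∈ ℂ[x_1,…,x_r] be polynomials such that for each i the difference Q_i − P_i is zero or has total degree strictly less than d_i. Then ℂ[x_1,…,x_r] is integral over the ℂ-subalgebra generated by Q_1,…,Q_r. -/

import Mathlib

open MvPolynomial

lemma aux_degree_add {σ : Type*} (a b : σ →₀ ℕ) :
    Finsupp.degree (a + b) = Finsupp.degree a + Finsupp.degree b := by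
  simp [Finsupp.degree_eq_weight_one, map_add]

lemma aux_hc_mul {σ : Type*} [DecidableEq σ] (c Pp : MvPolynomial σ ℂ) {dd n : ℕ}
    (hPp : Pp.IsHomogeneous dd) (hdn : dd ≤ n) :
    homogeneousComponent n (c * Pp) = homogeneousComponent (n - dd) c * Pp := by
  ext m
  rw [coeff_homogeneousComponent, coeff_mul, coeff_mul]
  split_ifs with h
  · apply Finset.sum_congr rfl
    intro x hx
    rw [coeff_homogeneousComponent]
    by_cases h2 : coeff x.2 Pp = 0
    · simp [h2]
    · have hdeg : (x.2).degree = dd := by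
        have := hPp h2
        rwa [Finsupp.degree_eq_weight_one]
      have hadd : x.1.degree + x.2.degree = m.degree := by
        rw [← aux_degree_add, Finset.HasAntidiagonal.mem_antidiagonal.mp hx]
      rw [if_pos (by omega)]
  · symm
    apply Finset.sum_eq_zero
    intro x hx
    rw [coeff_homogeneousComponent]
    by_cases h2 : coeff x.2 Pp = 0
    · simp [h2]
    · have hdeg : (x.2).degree = dd := by
        have := hPp h2
        rwa [Finsupp.degree_eq_weight_one]
      have hadd : x.1.degree + x.2.degree = m.degree := by
        rw [← aux_degree_add, Finset.HasAntidiagonal.mem_antidiagonal.mp hx]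
      rw [if_neg (by omega), zero_mul]

/-- `f - homogeneousComponent n f` has total degree `< n` when `deg f ≤ n`, `1 ≤ n`. -/
lemma aux_sub_hc {σ : Type*} (f : MvPolynomial σ ℂ) {n : ℕ} (hn : 1 ≤ n)
    (hf : f.totalDegree ≤ n) :
    (f - homogeneousComponent n f).totalDegree < n := by
  rw [totalDegree, Finset.sup_lt_iff (lt_of_lt_of_le (by simp) hn : (⊥ : ℕ) < n)]
  intro m hm
  rw [mem_support_iff] at hm
  have hcoeff : coeff m (f - homogeneousComponent n f)
      = coeff m f - (if m.degree = n then coeff m f else 0) := by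
    rw [coeff_sub, coeff_homogeneousComponent]
  by_cases hdm : m.degree = n
  · rw [hcoeff, if_pos hdm, sub_self] at hm
    exact absurd rfl hm
  · have h1 : coeff m f ≠ 0 := by
      intro h0
      rw [hcoeff, h0] at hm
      simp at hm
    have h2 : (m.sum fun _ e => e) ≤ f.totalDegree := le_totalDegree (mem_support_iff.mpr h1)
    have h3 : m.degree = m.sum fun _ e => e := rfl
    omega

/-- Every element of the adjoined algebra differs from a constant by
an element of the ideal generated by the generators. -/
lemma aux_adjoin_sub_C {σ : Type*} {s : Set (MvPolynomial σ ℂ)} {a : MvPolynomial σ ℂ}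
    (ha : a ∈ Algebra.adjoin ℂ s) :
    ∃ α : ℂ, a - C α ∈ Ideal.span s := by
  induction ha using Algebra.adjoin_induction with
  | mem x hx => exact ⟨0, by simpa using Ideal.subset_span hx⟩
  | algebraMap r => exact ⟨r, by simp [algebraMap_eq]⟩
  | add x y _ _ hx hy =>
    obtain ⟨α, hα⟩ := hx; obtain ⟨β, hβ⟩ := hy
    exact ⟨α + β, by have := Ideal.add_mem _ hα hβ; rw [map_add]; convert this using 1; ring⟩
  | mul x y _ _ hx hy =>
    obtain ⟨α, hα⟩ := hx; obtain ⟨β, hβ⟩ := hy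
    refine ⟨α * β, ?_⟩
    have h1 : x * (y - C β) ∈ Ideal.span s := Ideal.mul_mem_left _ _ hβ
    have h2 : C β * (x - C α) ∈ Ideal.span s := Ideal.mul_mem_left _ _ hα
    have := Ideal.add_mem _ h1 h2
    convert this using 1
    rw [map_mul]; ring

theorem stmt8 {r : ℕ} (P Q : Fin r → MvPolynomial (Fin r) ℂ)
    (d : Fin r → ℕ) (hd : ∀ i, 1 ≤ d i)
    (hP : ∀ i, (P i).IsHomogeneous (d i))
    (hQ : ∀ i, Q i - P i = 0 ∨ (Q i - P i).totalDegree < d i)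
    (hint : Algebra.IsIntegral (Algebra.adjoin ℂ (Set.range P))
      (MvPolynomial (Fin r) ℂ)) :
    Algebra.IsIntegral (Algebra.adjoin ℂ (Set.range Q))
      (MvPolynomial (Fin r) ℂ) := by
  classical
  set A := Algebra.adjoin ℂ (Set.range P) with hA
  set B := Algebra.adjoin ℂ (Set.range Q) with hB
  set I := Ideal.span (Set.range P) with hI
  -- ℂ[x] is a finite A-module
  haveI : Algebra.FiniteType A (MvPolynomial (Fin r) ℂ) :=
    Algebra.FiniteType.of_restrictScalars_finiteType ℂ A (MvPolynomial (Fin r) ℂ)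
  haveI hfin : Module.Finite A (MvPolynomial (Fin r) ℂ) := Algebra.IsIntegral.finite
  obtain ⟨S, hS⟩ : (⊤ : Submodule A (MvPolynomial (Fin r) ℂ)).FG := Module.finite_def.mp hfin
  set N : ℕ := max (S.sup totalDegree) (Finset.univ.sup d) with hN
  -- every f lies in span ℂ S + I
  have hsplit : ∀ f : MvPolynomial (Fin r) ℂ,
      f ∈ Submodule.span ℂ (S : Set (MvPolynomial (Fin r) ℂ))
        ⊔ I.restrictScalars ℂ := by
    intro f
    have hf : f ∈ Submodule.span A (S : Set (MvPolynomial (Fin r) ℂ)) := hS ▸ trivial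
    induction hf using Submodule.span_induction with
    | mem x hx => exact Submodule.mem_sup_left (Submodule.subset_span hx)
    | zero => exact zero_mem _
    | add x y _ _ hx hy => exact add_mem hx hy
    | smul a x _ hx =>
      obtain ⟨α, hα⟩ := aux_adjoin_sub_C (s := Set.range P) a.2
      have h2 : a • x = (a : MvPolynomial (Fin r) ℂ) * x := rfl
      have h1 : (a : MvPolynomial (Fin r) ℂ) * x
          = ((a : MvPolynomial (Fin r) ℂ) - C α) * x + α • x := by
        rw [sub_mul, smul_eq_C_mul]
        ring
      rw [h2, h1]
      exact add_mem (Submodule.mem_sup_right (Ideal.mul_mem_right _ _ hα))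
        (Submodule.smul_mem _ _ hx)
  -- degree bound on span ℂ S
  have hdegS : ∀ s ∈ Submodule.span ℂ (S : Set (MvPolynomial (Fin r) ℂ)),
      totalDegree s ≤ N := by
    intro s hs
    induction hs using Submodule.span_induction with
    | mem x hx => exact le_trans (Finset.le_sup hx) (le_max_left _ _)
    | zero => simp
    | add x y _ _ hx hy => exact le_trans (totalDegree_add x y) (max_le hx hy)
    | smul a x _ hx => exact le_trans (totalDegree_smul_le a x) hx
  -- generating monomials
  set G : Set (MvPolynomial (Fin r) ℂ) :=
    (fun m : Fin r →₀ ℕ => (monomial m (1 : ℂ))) '' {m | m.degree ≤ N} with hG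
  have hGfin : G.Finite := (Finsupp.finite_of_degree_le N).image _
  -- the key claim
  have key : ∀ n : ℕ, ∀ f : MvPolynomial (Fin r) ℂ, f.totalDegree ≤ n →
      f ∈ Submodule.span B G := by
    intro n
    induction n using Nat.strong_induction_on with
    | _ n IH =>
    intro f hf
    by_cases hfN : f.totalDegree ≤ N
    · -- low degree: ℂ-span of G
      have : f ∈ Submodule.span ℂ G := by
        rw [f.as_sum]
        apply Submodule.sum_mem
        intro m hm
        have hmd : m.degree ≤ N := le_trans (le_totalDegree hm) hfN
        have : (monomial m (coeff m f) : MvPolynomial (Fin r) ℂ)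
            = coeff m f • monomial m 1 := by
          rw [smul_monomial, smul_eq_mul, mul_one]
        rw [this]
        exact Submodule.smul_mem _ _ (Submodule.subset_span ⟨m, hmd, rfl⟩)
      exact Submodule.span_subset_span ℂ B G this
    · push_neg at hfN
      set nn := f.totalDegree with hnn
      have hNnn : N < nn := hfN
      have hnn1 : 1 ≤ nn := by omega
      -- decompose the top homogeneous component
      obtain ⟨s, hs, g, hg, hsg⟩ := Submodule.mem_sup.mp (hsplit f)
      have hhcs : homogeneousComponent nn s = 0 :=
        homogeneousComponent_eq_zero _ s (lt_of_le_of_lt (hdegS s hs) hNnn)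
      obtain ⟨c, hc⟩ := Ideal.mem_span_range_iff_exists_fun.mp hg
      set c' : Fin r → MvPolynomial (Fin r) ℂ :=
        fun i => homogeneousComponent (nn - d i) (c i) with hc'
      have hdi : ∀ i, d i ≤ N := fun i => le_trans (Finset.le_sup (Finset.mem_univ i))
        (le_max_right _ _)
      have hF : homogeneousComponent nn f = ∑ i, c' i * P i := by
        have : homogeneousComponent nn f
            = homogeneousComponent nn s + homogeneousComponent nn g := by
          rw [← map_add, hsg]
        rw [this, hhcs, zero_add, ← hc, map_sum]
        apply Finset.sum_congr rfl
        intro i _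
        exact aux_hc_mul (c i) (P i) (hP i) (le_trans (hdi i) hNnn.le)
      -- degree bounds
      have hc'deg : ∀ i, (c' i).totalDegree ≤ nn - d i := fun i =>
        (homogeneousComponent_isHomogeneous (nn - d i) (c i)).totalDegree_le
      have hterm : ∀ i, (c' i * (Q i - P i)).totalDegree ≤ nn - 1 := by
        intro i
        rcases hQ i with h0 | hlt
        · rw [h0, mul_zero]
          simp only [totalDegree_zero]
          omega
        · refine le_trans (totalDegree_mul _ _) ?_
          have := hc'deg i
          have := hd i
          have := hdi i
          omega
      -- rewrite f
      have hfeq : f = ((f - homogeneousComponent nn f)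
          - ∑ i, c' i * (Q i - P i)) + ∑ i, c' i * Q i := by
        have h1 : (∑ i, c' i * (Q i - P i)) = (∑ i, c' i * Q i) - ∑ i, c' i * P i := by
          rw [← Finset.sum_sub_distrib]
          exact Finset.sum_congr rfl fun i _ => mul_sub _ _ _
        rw [h1, hF]
        ring
      rw [hfeq]
      have hfF : f - homogeneousComponent nn f ∈ Submodule.span B G := by
        have hlt := aux_sub_hc f hnn1 le_rfl
        exact IH (nn - 1) (by omega) _ (by omega)
      have hsum1 : (∑ i, c' i * (Q i - P i)) ∈ Submodule.span B G := by
        apply Submodule.sum_mem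
        intro i _
        exact IH (nn - 1) (by omega) _ (hterm i)
      have hsum2 : (∑ i, c' i * Q i) ∈ Submodule.span B G := by
        apply Submodule.sum_mem
        intro i _
        have hci : c' i ∈ Submodule.span B G := by
          apply IH (nn - 1) (by omega)
          have := hc'deg i
          have := hd i
          have := hdi i
          omega
        have hQmem : Q i ∈ B := Algebra.subset_adjoin ⟨i, rfl⟩
        have := Submodule.smul_mem (Submodule.span B G) (⟨Q i, hQmem⟩ : B) hci
        have heq : (⟨Q i, hQmem⟩ : B) • c' i = c' i * Q i := by
          rw [Algebra.smul_def]
          exact mul_comm _ _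
        rwa [heq] at this
      exact add_mem (sub_mem hfF hsum1) hsum2
  -- conclude
  haveI : Module.Finite B (MvPolynomial (Fin r) ℂ) := by
    refine ⟨⟨hGfin.toFinset, ?_⟩⟩
    rw [hGfin.coe_toFinset]
    rw [eq_top_iff]
    intro f _
    exact key f.totalDegree f le_rfl
  exact Algebra.IsIntegral.of_finite B _
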